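/- Let (X,Ω) be a measurable space and E a Dedekind complete Banach lattice. Then the vector lattice M(X,Ω,E) of E-valued measures, normed by ‖μ‖ := ‖|μ|(X)‖, is norm complete, i.e., a Banach lattice. Moreover, if E is an AL-space then so is M(X,Ω,E), and if the norm of E is order continuous then so is the norm of M(X,Ω,E). -/

import Mathlib

variable {X : Type*} [MeasurableSpace X]
variable {E : Type*} [NormedAddCommGroup E] [Lattice E] [HasSolidNorm E]
  [IsOrderedAddMonoid E] [NormedSpace ℝ E]
  [CompleteSpace E]

/-- A finite `E⁺`-valued measure. -/
def IsFinMeasure (μ : Set X → E) : Prop :=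
  μ ∅ = 0 ∧ (∀ Δ, MeasurableSet Δ → 0 ≤ μ Δ) ∧
    ∀ Δ : ℕ → Set X, (∀ n, MeasurableSet (Δ n)) →
      Pairwise (Function.onFun Disjoint Δ) →
      IsLUB (Set.range fun N => ∑ n ∈ Finset.range N, μ (Δ n))
        (μ (⋃ n, Δ n))

/-- The pointwise order on measures. -/
def MeasLE (μ ν : Set X → E) : Prop :=
  ∀ Δ, MeasurableSet Δ → μ Δ ≤ ν Δ

lemma mono_partial {F : Type*} [AddCommMonoid F] [PartialOrder F] [IsOrderedAddMonoid F] {f : ℕ → F} (hf : ∀ n, 0 ≤ f n) :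
    Monotone (fun N => ∑ n ∈ Finset.range N, f n) :=
  monotone_nat_of_le_succ fun n => by
    rw [Finset.sum_range_succ]; exact le_add_of_nonneg_right (hf n)

lemma isLUB_range_add {f g : ℕ → E} {a b : E} (hf : Monotone f) (hg : Monotone g)
    (ha : IsLUB (Set.range f) a) (hb : IsLUB (Set.range g) b) :
    IsLUB (Set.range fun n => f n + g n) (a + b) := by
  constructor
  · rintro _ ⟨n, rfl⟩
    exact add_le_add (ha.1 ⟨n, rfl⟩) (hb.1 ⟨n, rfl⟩)
  · intro u hu
    have key : ∀ n m : ℕ, f n + g m ≤ u := fun n m =>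
      le_trans (add_le_add (hf (le_max_left n m)) (hg (le_max_right n m)))
        (hu ⟨max n m, rfl⟩)
    have h1 : ∀ m, a ≤ u - g m := fun m =>
      ha.2 (by rintro _ ⟨n, rfl⟩; exact le_sub_iff_add_le.2 (key n m))
    have h2 : b ≤ u - a := by
      refine hb.2 ?_
      rintro _ ⟨m, rfl⟩
      have := h1 m
      rw [le_sub_iff_add_le] at this ⊢
      rwa [add_comm]
    have : a + b ≤ a + (u - a) := add_le_add_right h2 a
    simpa using this

lemma isLUB_range_sum {ι : Type*} (s : Finset ι) (f : ι → ℕ → E) (a : ι → E)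
    (hm : ∀ i ∈ s, Monotone (f i)) (h : ∀ i ∈ s, IsLUB (Set.range (f i)) (a i)) :
    IsLUB (Set.range fun N => ∑ i ∈ s, f i N) (∑ i ∈ s, a i) := by
  classical
  induction s using Finset.induction with
  | empty =>
      simp only [Finset.sum_empty]
      convert isLUB_singleton (a := (0 : E))
      simp [Set.eq_singleton_iff_unique_mem]
  | @insert x s hx ih =>
      simp only [Finset.sum_insert hx]
      exact isLUB_range_add (hm x (Finset.mem_insert_self x s))
        (fun N M hNM => Finset.sum_le_sum fun i hi =>
          hm i (Finset.mem_insert_of_mem hi) hNM)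
        (h x (Finset.mem_insert_self x s))
        (ih (fun i hi => hm i (Finset.mem_insert_of_mem hi))
          (fun i hi => h i (Finset.mem_insert_of_mem hi)))

lemma IsFinMeasure.union {μ : Set X → E} (hμ : IsFinMeasure μ) {A B : Set X}
    (hA : MeasurableSet A) (hB : MeasurableSet B) (hd : Disjoint A B) :
    μ (A ∪ B) = μ A + μ B := by
  classical
  set Δ : ℕ → Set X := fun n => if n = 0 then A else if n = 1 then B else ∅ with hΔ
  have hmeas : ∀ n, MeasurableSet (Δ n) := by
    intro n
    simp only [hΔ]
    split_ifs <;> first | exact hA | exact hB | exact MeasurableSet.empty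
  have hdis : Pairwise (Function.onFun Disjoint Δ) := by
    intro i j hij
    unfold Function.onFun
    simp only [hΔ]
    split_ifs <;> first | omega | exact hd | exact hd.symm | simp
  have hU : (⋃ n, Δ n) = A ∪ B := by
    apply Set.Subset.antisymm
    · refine Set.iUnion_subset fun n => ?_
      simp only [hΔ]
      split_ifs <;> simp [Set.subset_union_left, Set.subset_union_right]
    · apply Set.union_subset
      · exact (le_iSup Δ 0).trans_eq' (by simp [hΔ])
      · exact (le_iSup Δ 1).trans_eq' (by simp [hΔ])
  have hlub := hμ.2.2 Δ hmeas hdis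
  rw [hU] at hlub
  have hS2 : (∑ n ∈ Finset.range 2, μ (Δ n)) = μ A + μ B := by
    rw [Finset.sum_range_succ, Finset.sum_range_one]
    simp [hΔ]
  have hgr : IsGreatest (Set.range fun N => ∑ n ∈ Finset.range N, μ (Δ n)) (μ A + μ B) := by
    constructor
    · exact ⟨2, hS2⟩
    · rintro _ ⟨N, rfl⟩
      have hmono := mono_partial (f := fun n => μ (Δ n)) (fun n => hμ.2.1 _ (hmeas n))
      have hz : ∀ n, 2 ≤ n → μ (Δ n) = 0 := by
        intro n hn
        have hΔn : Δ n = ∅ := by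
          simp only [hΔ]
          rw [if_neg (by omega), if_neg (by omega)]
        rw [hΔn, hμ.1]
      have hstab : ∀ N, 2 ≤ N → (∑ n ∈ Finset.range N, μ (Δ n)) = μ A + μ B := by
        intro N hN
        induction N with
        | zero => omega
        | succ m ih =>
          rcases Nat.lt_or_ge m 2 with hm | hm
          · have hm1 : m = 1 := by omega
            subst hm1; exact hS2
          · rw [Finset.sum_range_succ, ih hm, hz m hm, add_zero]
      rcases le_or_gt N 2 with h | h
      · exact (hmono h).trans_eq hS2
      · exact (hstab N h.le).le
  exact hlub.unique hgr.isLUB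

lemma IsFinMeasure.mono {μ : Set X → E} (hμ : IsFinMeasure μ) {A B : Set X}
    (hA : MeasurableSet A) (hB : MeasurableSet B) (hAB : A ⊆ B) : μ A ≤ μ B := by
  have h := hμ.union hA (hB.diff hA) disjoint_sdiff_self_right
  rw [Set.union_diff_cancel hAB] at h
  rw [h]
  exact le_add_of_nonneg_right (hμ.2.1 _ (hB.diff hA))

lemma addit_sum_range {μ : Set X → E} (h0 : μ ∅ = 0)
    (hadd : ∀ A B : Set X, MeasurableSet A → MeasurableSet B → Disjoint A B →
      μ (A ∪ B) = μ A + μ B) {Δ : ℕ → Set X}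
    (hm : ∀ n, MeasurableSet (Δ n)) (hd : Pairwise (Function.onFun Disjoint Δ)) (N : ℕ) :
    μ (⋃ n ∈ Finset.range N, Δ n) = ∑ n ∈ Finset.range N, μ (Δ n) := by
  induction N with
  | zero => simpa using h0
  | succ m ih =>
    rw [Finset.sum_range_succ, ← ih, Finset.range_add_one]
    rw [Finset.set_biUnion_insert]
    rw [Set.union_comm]
    refine hadd _ _ (MeasurableSet.biUnion (Finset.range m).countable_toSet fun n _ => hm n)
      (hm m) ?_
    rw [Set.disjoint_left]
    rintro x hx hxm
    simp only [Set.mem_iUnion] at hx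
    obtain ⟨n, hn, hxn⟩ := hx
    have hnm : n ≠ m := by simp at hn; omega
    exact (hd hnm).le_bot ⟨hxn, hxm⟩

lemma IsFinMeasure.sum_range {μ : Set X → E} (hμ : IsFinMeasure μ) {Δ : ℕ → Set X}
    (hm : ∀ n, MeasurableSet (Δ n)) (hd : Pairwise (Function.onFun Disjoint Δ)) (N : ℕ) :
    μ (⋃ n ∈ Finset.range N, Δ n) = ∑ n ∈ Finset.range N, μ (Δ n) :=
  addit_sum_range hμ.1 (fun _ _ hA hB hAB => hμ.union hA hB hAB) hm hd N
/-- for `E` a Dedekind complete Banach lattice, `M(X,Ω,E)` with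
the norm `‖μ‖ = ‖|μ|(X)‖` is a Banach lattice.  Completeness is expressed by
the Riesz–Fischer property: every norm-absolutely convergent series of
positive measures has a sum in `M(X,Ω,E)` (which is the supremum of the
partial sums, and the limit of the partial sums at every `Δ`).  Moreover, if
`E` is an AL-space then so is `M(X,Ω,E)`, and if the norm of `E` is order
continuous then so is that of `M(X,Ω,E)`. -/
theorem stmt_19
    (hDed : ∀ T : Set E, T.Nonempty → BddAbove T → ∃ a, IsLUB T a) :
    -- Riesz–Fischer property: norm completeness of `M(X,Ω,E)`
    (∀ ν : ℕ → Set X → E, (∀ k, IsFinMeasure (ν k)) →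
      (Summable fun k => ‖ν k Set.univ‖) →
      ∃ μ : Set X → E, IsFinMeasure μ ∧
        (∀ Δ, MeasurableSet Δ → HasSum (fun k => ν k Δ) (μ Δ)) ∧
        ∀ Δ, MeasurableSet Δ →
          IsLUB (Set.range fun N => ∑ k ∈ Finset.range N, ν k Δ) (μ Δ)) ∧
    -- if `E` is an AL-space then the norm of `M(X,Ω,E)` is additive on
    -- the positive cone (note `‖μ‖ = ‖μ(X)‖` for positive `μ`)
    ((∀ a b : E, 0 ≤ a → 0 ≤ b → ‖a + b‖ = ‖a‖ + ‖b‖) →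
      ∀ μ ν : Set X → E, IsFinMeasure μ → IsFinMeasure ν →
        ‖μ Set.univ + ν Set.univ‖ = ‖μ Set.univ‖ + ‖ν Set.univ‖) ∧
    -- if the norm of `E` is order continuous then so is that of `M(X,Ω,E)`:
    -- a downward directed set of positive measures with pointwise infimum `0`
    -- contains measures of arbitrarily small norm
    ((∀ A : Set E, A.Nonempty → DirectedOn (· ≥ ·) A → IsGLB A 0 →
        ∀ ε > 0, ∃ a ∈ A, ‖a‖ < ε) →
      ∀ D : Set (Set X → E), D.Nonempty → (∀ μ ∈ D, IsFinMeasure μ) →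
        DirectedOn (fun μ ν => MeasLE ν μ) D →
        (∀ σ : Set X → E, IsFinMeasure σ → (∀ μ ∈ D, MeasLE σ μ) →
          ∀ Δ, MeasurableSet Δ → σ Δ ≤ 0) →
        ∀ ε > 0, ∃ μ ∈ D, ‖μ Set.univ‖ < ε) := by
  refine ⟨?_, ?_, ?_⟩
  · intro ν hν hsum
    have hle : ∀ k (Δ : Set X), MeasurableSet Δ → ‖ν k Δ‖ ≤ ‖ν k Set.univ‖ := by
      intro k Δ hΔ
      have h0 : 0 ≤ ν k Δ := (hν k).2.1 _ hΔ
      have h1 : ν k Δ ≤ ν k Set.univ :=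
        (hν k).mono hΔ MeasurableSet.univ (Set.subset_univ _)
      exact HasSolidNorm.solid (by rwa [abs_of_nonneg h0, abs_of_nonneg (h0.trans h1)])
    have hsummΔ : ∀ Δ : Set X, MeasurableSet Δ → Summable fun k => ν k Δ := by
      intro Δ hΔ
      exact Summable.of_norm
        (hsum.of_nonneg_of_le (fun k => norm_nonneg _) (fun k => hle k Δ hΔ))
    refine ⟨fun Δ => ∑' k, ν k Δ, ⟨?_, ?_, ?_⟩, ?_, ?_⟩
    · have h : (fun k => ν k (∅ : Set X)) = fun _ => 0 := funext fun k => (hν k).1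
      simp only [h, tsum_zero]
    · intro Δ hΔ
      exact tsum_nonneg fun k => (hν k).2.1 _ hΔ
    · intro Δ hm hd
      have hU : MeasurableSet (⋃ n, Δ n) := MeasurableSet.iUnion hm
      constructor
      · rintro _ ⟨N, rfl⟩
        dsimp only
        rw [← Summable.tsum_finsetSum (fun n _ => hsummΔ _ (hm n))]
        exact Summable.tsum_le_tsum (fun k => ((hν k).2.2 Δ hm hd).1 ⟨N, rfl⟩)
          (summable_sum fun n _ => hsummΔ _ (hm n)) (hsummΔ _ hU)
      · intro u hu
        refine Summable.tsum_le_of_sum_range_le (hsummΔ _ hU) fun K => ?_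
        have hKlub : IsLUB
            (Set.range fun N => ∑ k ∈ Finset.range K, ∑ n ∈ Finset.range N, ν k (Δ n))
            (∑ k ∈ Finset.range K, ν k (⋃ n, Δ n)) :=
          isLUB_range_sum _ (fun k N => ∑ n ∈ Finset.range N, ν k (Δ n)) (fun k => ν k (⋃ n, Δ n))
            (fun k _ => mono_partial fun n => (hν k).2.1 _ (hm n))
            (fun k _ => (hν k).2.2 Δ hm hd)
        refine hKlub.2 ?_
        rintro _ ⟨N, rfl⟩
        dsimp only
        rw [Finset.sum_comm]
        refine le_trans (Finset.sum_le_sum fun n _ =>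
          Summable.sum_le_tsum (Finset.range K) (fun k _ => (hν k).2.1 _ (hm n)) (hsummΔ _ (hm n)))
          (hu ⟨N, rfl⟩)
    · intro Δ hΔ
      exact (hsummΔ Δ hΔ).hasSum
    · intro Δ hΔ
      exact isLUB_of_tendsto_atTop (mono_partial fun k => (hν k).2.1 _ hΔ)
        ((hsummΔ Δ hΔ).hasSum.tendsto_sum_nat)
  · intro h μ ν hμ hν
    exact h _ _ (hμ.2.1 _ MeasurableSet.univ) (hν.2.1 _ MeasurableSet.univ)
  · intro hE D hne hmeas hdir hinf ε hε
    -- pointwise infimum of D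
    have hglb : ∀ Δ : Set X, ∃ a : E, 0 ≤ a ∧
        (MeasurableSet Δ → IsGLB ((fun μ => μ Δ) '' D) a) := by
      intro Δ
      by_cases hΔ : MeasurableSet Δ
      · set T := (fun μ => μ Δ) '' D with hT
        have hTne : T.Nonempty := hne.image _
        obtain ⟨a', ha'⟩ := hDed (Neg.neg '' T) (hTne.image _)
          ⟨0, by rintro _ ⟨_, ⟨μ, hμ, rfl⟩, rfl⟩
                 exact neg_nonpos_of_nonneg ((hmeas μ hμ).2.1 _ hΔ)⟩
        have hgl : IsGLB T (-a') := by
          constructor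
          · intro t ht
            have : -t ≤ a' := ha'.1 ⟨t, ht, rfl⟩
            exact neg_le.mp this
          · intro b hb
            have : a' ≤ -b := ha'.2 (by rintro _ ⟨t, ht, rfl⟩; exact neg_le_neg (hb ht))
            exact le_neg_of_le_neg this
        refine ⟨-a', ?_, fun _ => hgl⟩
        exact hgl.2 (by rintro _ ⟨μ, hμ, rfl⟩; exact (hmeas μ hμ).2.1 _ hΔ)
      · exact ⟨0, le_rfl, fun h => absurd h hΔ⟩
    choose σ hσ0 hσglb using hglb
    have hσle : ∀ μ ∈ D, MeasLE σ μ := fun μ hμ Δ hΔ => (hσglb Δ hΔ).1 ⟨μ, hμ, rfl⟩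
    obtain ⟨μ0, hμ0⟩ := hne
    have hσ_empty : σ ∅ = 0 :=
      le_antisymm ((hσle μ0 hμ0 ∅ MeasurableSet.empty).trans_eq (hmeas μ0 hμ0).1)
        (hσ0 ∅)
    -- finite additivity of σ
    have hadd : ∀ A B : Set X, MeasurableSet A → MeasurableSet B → Disjoint A B →
        σ (A ∪ B) = σ A + σ B := by
      intro A B hA hB hd
      refine ((hσglb _ (hA.union hB)).unique ?_)
      constructor
      · rintro _ ⟨μ, hμD, rfl⟩
        dsimp only
        rw [(hmeas μ hμD).union hA hB hd]
        exact add_le_add ((hσglb A hA).1 ⟨μ, hμD, rfl⟩) ((hσglb B hB).1 ⟨μ, hμD, rfl⟩)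
      · intro b hb
        have key : ∀ μ₂ ∈ D, b - μ₂ B ≤ σ A := by
          intro μ₂ hμ₂
          refine (hσglb A hA).2 ?_
          rintro _ ⟨μ₁, hμ₁, rfl⟩
          obtain ⟨ρ, hρD, hρ1, hρ2⟩ := hdir μ₁ hμ₁ μ₂ hμ₂
          have h1 : b ≤ ρ (A ∪ B) := hb ⟨ρ, hρD, rfl⟩
          rw [(hmeas ρ hρD).union hA hB hd] at h1
          have h2 := h1.trans (add_le_add (hρ1 A hA) (hρ2 B hB))
          exact sub_le_iff_le_add.2 h2
        have h3 : b - σ A ≤ σ B := by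
          refine (hσglb B hB).2 ?_
          rintro _ ⟨μ₂, hμ₂, rfl⟩
          have h4 := sub_le_iff_le_add.1 (key μ₂ hμ₂)
          rw [add_comm] at h4
          exact sub_le_iff_le_add.2 h4
        have := sub_le_iff_le_add.1 h3
        rwa [add_comm] at this
    have hσmono : ∀ A B : Set X, MeasurableSet A → MeasurableSet B → A ⊆ B →
        σ A ≤ σ B := by
      intro A B hA hB hAB
      have h := hadd A (B \ A) hA (hB.diff hA) disjoint_sdiff_self_right
      rw [Set.union_diff_cancel hAB] at h
      rw [h]
      exact le_add_of_nonneg_right (hσ0 _)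
    -- σ is a finite measure
    have hσfin : IsFinMeasure σ := by
      refine ⟨hσ_empty, fun Δ _ => hσ0 Δ, ?_⟩
      intro Δ hm hd
      have hU : MeasurableSet (⋃ n, Δ n) := MeasurableSet.iUnion hm
      have hUN : ∀ N, MeasurableSet (⋃ n ∈ Finset.range N, Δ n) := fun N =>
        MeasurableSet.biUnion (Finset.range N).countable_toSet fun n _ => hm n
      have hsub : ∀ N, (⋃ n ∈ Finset.range N, Δ n) ⊆ ⋃ n, Δ n := fun N =>
        Set.iUnion₂_subset fun n _ => Set.subset_iUnion Δ n
      constructor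
      · rintro _ ⟨N, rfl⟩
        dsimp only
        rw [← addit_sum_range hσ_empty hadd hm hd N]
        exact hσmono _ _ (hUN N) hU (hsub N)
      · intro u hu
        -- for each N : σ U ≤ u + (μ0 U - ∑_{n<N} μ0 (Δ n))
        have hkey : ∀ N : ℕ, ∑ n ∈ Finset.range N, μ0 (Δ n) ≤
            u + μ0 (⋃ n, Δ n) - σ (⋃ n, Δ n) := by
          intro N
          have hsplit : σ (⋃ n, Δ n) =
              σ (⋃ n ∈ Finset.range N, Δ n) + σ ((⋃ n, Δ n) \ ⋃ n ∈ Finset.range N, Δ n) := by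
            rw [← hadd _ _ (hUN N) (hU.diff (hUN N)) disjoint_sdiff_self_right,
              Set.union_diff_cancel (hsub N)]
          have h1 : σ ((⋃ n, Δ n) \ ⋃ n ∈ Finset.range N, Δ n) ≤
              μ0 ((⋃ n, Δ n) \ ⋃ n ∈ Finset.range N, Δ n) :=
            hσle μ0 hμ0 _ (hU.diff (hUN N))
          have h2 : μ0 (⋃ n, Δ n) =
              μ0 (⋃ n ∈ Finset.range N, Δ n) + μ0 ((⋃ n, Δ n) \ ⋃ n ∈ Finset.range N, Δ n) := by
            rw [← (hmeas μ0 hμ0).union (hUN N) (hU.diff (hUN N)) disjoint_sdiff_self_right,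
              Set.union_diff_cancel (hsub N)]
          have h3 : σ (⋃ n ∈ Finset.range N, Δ n) = ∑ n ∈ Finset.range N, σ (Δ n) :=
            addit_sum_range hσ_empty hadd hm hd N
          have h4 : σ (⋃ n, Δ n) ≤ ∑ n ∈ Finset.range N, σ (Δ n) +
              (μ0 (⋃ n, Δ n) - μ0 (⋃ n ∈ Finset.range N, Δ n)) := by
            rw [hsplit, h3]
            have : μ0 ((⋃ n, Δ n) \ ⋃ n ∈ Finset.range N, Δ n) =
                μ0 (⋃ n, Δ n) - μ0 (⋃ n ∈ Finset.range N, Δ n) := by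
              rw [h2]; abel
            rw [← this]
            exact add_le_add_right h1 _
          have h5 : σ (⋃ n, Δ n) ≤ u + (μ0 (⋃ n, Δ n) - ∑ n ∈ Finset.range N, μ0 (Δ n)) := by
            refine h4.trans ?_
            rw [(hmeas μ0 hμ0).sum_range hm hd N]
            exact add_le_add_left (hu ⟨N, rfl⟩) _
          -- rearrange
          have h5' : σ (⋃ n, Δ n) + ∑ n ∈ Finset.range N, μ0 (Δ n) ≤
              u + μ0 (⋃ n, Δ n) := by
            have h6 := add_le_add_left h5 (∑ n ∈ Finset.range N, μ0 (Δ n))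
            calc σ (⋃ n, Δ n) + ∑ n ∈ Finset.range N, μ0 (Δ n) ≤
                (u + (μ0 (⋃ n, Δ n) - ∑ n ∈ Finset.range N, μ0 (Δ n))) +
                  ∑ n ∈ Finset.range N, μ0 (Δ n) := h6
              _ = u + μ0 (⋃ n, Δ n) := by abel
          rw [le_sub_iff_add_le, add_comm]
          exact h5'
        have hμ0lub := (hmeas μ0 hμ0).2.2 Δ hm hd
        have h6 : μ0 (⋃ n, Δ n) ≤ u + μ0 (⋃ n, Δ n) - σ (⋃ n, Δ n) :=
          hμ0lub.2 (by rintro _ ⟨N, rfl⟩; exact hkey N)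
        -- conclude σ U ≤ u
        have h7 : σ (⋃ n, Δ n) + μ0 (⋃ n, Δ n) ≤ u + μ0 (⋃ n, Δ n) := by
          have h8 := add_le_add_right h6 (σ (⋃ n, Δ n))
          calc σ (⋃ n, Δ n) + μ0 (⋃ n, Δ n) ≤
              σ (⋃ n, Δ n) + (u + μ0 (⋃ n, Δ n) - σ (⋃ n, Δ n)) := h8
            _ = u + μ0 (⋃ n, Δ n) := by abel
        exact le_of_add_le_add_right h7
    -- conclude via hE
    have hσzero : σ Set.univ = 0 :=
      le_antisymm (hinf σ hσfin hσle Set.univ MeasurableSet.univ) (hσ0 _)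
    obtain ⟨a, ⟨μ, hμD, rfl⟩, ha⟩ := hE ((fun μ => μ Set.univ) '' D) ⟨μ0 Set.univ, ⟨μ0, hμ0, rfl⟩⟩
      (by
        rintro _ ⟨μ1, h1, rfl⟩ _ ⟨μ2, h2, rfl⟩
        obtain ⟨ρ, hρD, hρ1, hρ2⟩ := hdir μ1 h1 μ2 h2
        exact ⟨ρ Set.univ, ⟨ρ, hρD, rfl⟩, hρ1 _ MeasurableSet.univ, hρ2 _ MeasurableSet.univ⟩)
      (by
        constructor
        · rintro _ ⟨μ, hμ, rfl⟩
          exact (hmeas μ hμ).2.1 _ MeasurableSet.univ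
        · intro b hb
          have : b ≤ σ Set.univ := (hσglb _ MeasurableSet.univ).2 hb
          rwa [hσzero] at this)
      ε hε
    exact ⟨μ, hμD, ha⟩
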